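/- Let λ, θ : I → ℝ be smooth with sin θ > 0, satisfying λ' = −κ cos θ sin θ and θ' = λ on an interval I, with κ ≠ 0. If λ is a polynomial function of u, then λ ≡ 0 and cos θ ≡ 0 (i.e. θ ≡ π/2 modulo 2π). -/

import Mathlib

open Polynomial in
/-- ODE lemma: if smooth λ, θ on an interval satisfy λ' = −κ cos θ sin θ, θ' = λ,
sin θ > 0, κ ≠ 0, and λ is a polynomial function, then λ ≡ 0 and cos θ ≡ 0. -/
theorem polynomial_lambda_vanishes
    (κ : ℝ) (hκ : κ ≠ 0) (a b : ℝ) (hab : a < b)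
    (lam θ : ℝ → ℝ)
    (hlam : ∀ u ∈ Set.Ioo a b,
      HasDerivAt lam (-κ * Real.cos (θ u) * Real.sin (θ u)) u)
    (hθ : ∀ u ∈ Set.Ioo a b, HasDerivAt θ (lam u) u)
    (hsin : ∀ u ∈ Set.Ioo a b, Real.sin (θ u) > 0)
    (hpoly : ∃ P : Polynomial ℝ, ∀ u ∈ Set.Ioo a b, lam u = P.eval u) :
    ∀ u ∈ Set.Ioo a b, lam u = 0 ∧ Real.cos (θ u) = 0 := by
  obtain ⟨P, hP⟩ := hpoly
  have hIinf : (Set.Ioo a b).Infinite := Set.infinite_coe_iff.mp (Set.Ioo.infinite hab)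
  have hnhds : ∀ u ∈ Set.Ioo a b, Set.Ioo a b ∈ nhds u :=
    fun u hu => isOpen_Ioo.mem_nhds hu
  set Q : Polynomial ℝ := P.derivative with hQdef
  -- derivative of lam two ways
  have hEq : ∀ u ∈ Set.Ioo a b,
      Q.eval u = -κ * Real.cos (θ u) * Real.sin (θ u) := by
    intro u hu
    have h1 : HasDerivAt lam (Q.eval u) u := by
      refine (P.hasDerivAt u).congr_of_eventuallyEq ?_
      filter_upwards [hnhds u hu] with v hv using hP v hv
    exact h1.unique (hlam u hu)
  -- sin(2θ) in terms of Q
  have hs2 : ∀ u ∈ Set.Ioo a b, Real.sin (2 * θ u) = (-2 / κ) * Q.eval u := by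
    intro u hu
    rw [Real.sin_two_mul, hEq u hu]
    field_simp
  -- derivative of sin(2θ) two ways
  have hc2 : ∀ u ∈ Set.Ioo a b,
      Real.cos (2 * θ u) * (2 * lam u) = (-2 / κ) * Q.derivative.eval u := by
    intro u hu
    have h1 : HasDerivAt (fun v => Real.sin (2 * θ v))
        (Real.cos (2 * θ u) * (2 * lam u)) u := ((hθ u hu).const_mul 2).sin
    have h2 : HasDerivAt (fun v => Real.sin (2 * θ v))
        ((-2 / κ) * Q.derivative.eval u) u := by
      refine ((Q.hasDerivAt u).const_mul (-2 / κ)).congr_of_eventuallyEq ?_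
      filter_upwards [hnhds u hu] with v hv using hs2 v hv
    exact h1.unique h2
  -- pointwise polynomial relation
  have hpt : ∀ u ∈ Set.Ioo a b,
      (Q.derivative.eval u) ^ 2 = (P.eval u) ^ 2 * (κ ^ 2 - 4 * (Q.eval u) ^ 2) := by
    intro u hu
    have hpyth := Real.sin_sq_add_cos_sq (2 * θ u)
    have h1 := hs2 u hu
    have h2 := hc2 u hu
    have hl := hP u hu
    have h1' : κ * Real.sin (2 * θ u) = -2 * Q.eval u := by
      rw [h1]; field_simp
    have h2' : κ * (Real.cos (2 * θ u) * (2 * P.eval u)) = -2 * Q.derivative.eval u := by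
      rw [← hl, h2]; field_simp
    have e1 : (κ * Real.sin (2 * θ u)) ^ 2 = (-2 * Q.eval u) ^ 2 := by rw [h1']
    have e2 : (κ * (Real.cos (2 * θ u) * (2 * P.eval u))) ^ 2
        = (-2 * Q.derivative.eval u) ^ 2 := by rw [h2']
    linear_combination (-1/4 : ℝ) * e2 + (-(P.eval u)^2) * e1
      + (κ^2 * (P.eval u)^2) * hpyth
  -- promote to polynomial identity
  have pident : Q.derivative ^ 2 = P ^ 2 * (C (κ ^ 2) - C 4 * Q ^ 2) := by
    rw [← sub_eq_zero]
    apply Polynomial.eq_zero_of_infinite_isRoot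
    apply Set.Infinite.mono (s := Set.Ioo a b) _ hIinf
    intro u hu
    simp only [Set.mem_setOf_eq, Polynomial.IsRoot.def, Polynomial.eval_sub,
      Polynomial.eval_mul, Polynomial.eval_pow, Polynomial.eval_C]
    rw [hpt u hu]; ring
  -- main claim: Q = 0
  have hQ0 : Q = 0 := by
    by_contra hQ
    have hPne : P ≠ 0 := fun h => hQ (by simp [hQdef, h])
    rcases Nat.eq_zero_or_pos Q.natDegree with hd0 | hdpos
    · -- Q is a nonzero constant c, κ² = 4c²
      obtain ⟨c, hc⟩ := Polynomial.natDegree_eq_zero.mp hd0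
      have hcne : c ≠ 0 := by rintro rfl; simp at hc; exact hQ hc.symm
      have hQd : Q.derivative = 0 := by rw [← hc]; simp
      have hfac : C (κ ^ 2) - C 4 * Q ^ 2 = 0 := by
        have : P ^ 2 * (C (κ ^ 2) - C 4 * Q ^ 2) = 0 := by
          rw [← pident, hQd]; ring
        rcases mul_eq_zero.mp this with h | h
        · exact absurd (pow_eq_zero_iff two_ne_zero |>.mp h) hPne
        · exact h
      have hκc : κ ^ 2 = 4 * c ^ 2 := by
        rw [← hc] at hfac
        have := sub_eq_zero.mp hfac
        have h2 : C (κ ^ 2) = C (4 * c ^ 2) := by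
          rw [this, ← Polynomial.C_pow, ← Polynomial.C_mul]
        exact Polynomial.C_injective h2
      -- sin(2θ) = ±1 and cos(2θ) = 0 on I
      have hsval : ∀ u ∈ Set.Ioo a b, Real.sin (2 * θ u) = -2 * c / κ := by
        intro u hu
        rw [hs2 u hu, ← hc]; simp; ring
      have hcos0 : ∀ u ∈ Set.Ioo a b, Real.cos (2 * θ u) = 0 := by
        intro u hu
        have hpyth := Real.sin_sq_add_cos_sq (2 * θ u)
        have := hsval u hu
        have hs : Real.sin (2 * θ u) ^ 2 = 1 := by
          rw [this]; field_simp; nlinarith [hκc]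
        nlinarith [sq_nonneg (Real.cos (2 * θ u))]
      -- deriv of cos(2θ) vanishes ⇒ lam = 0 on I
      have hlam0 : ∀ u ∈ Set.Ioo a b, lam u = 0 := by
        intro u hu
        have h1 : HasDerivAt (fun v => Real.cos (2 * θ v))
            (-Real.sin (2 * θ u) * (2 * lam u)) u := ((hθ u hu).const_mul 2).cos
        have h2 : HasDerivAt (fun v => Real.cos (2 * θ v)) 0 u := by
          refine (hasDerivAt_const u (0:ℝ)).congr_of_eventuallyEq ?_
          filter_upwards [hnhds u hu] with v hv using hcos0 v hv
        have h3 := h1.unique h2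
        have hsne : Real.sin (2 * θ u) ≠ 0 := by
          have hp := Real.sin_sq_add_cos_sq (2 * θ u)
          rw [hcos0 u hu] at hp
          intro h0; rw [h0] at hp; norm_num at hp
        have := mul_eq_zero.mp h3
        rcases this with h | h
        · exact absurd (neg_eq_zero.mp h) hsne
        · linarith
      -- so P has infinitely many roots ⇒ P = 0, contradiction
      apply hPne
      apply Polynomial.eq_zero_of_infinite_isRoot
      apply Set.Infinite.mono (s := Set.Ioo a b) _ hIinf
      intro u hu
      simp only [Set.mem_setOf_eq, Polynomial.IsRoot]
      rw [← hP u hu]; exact hlam0 u hu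
    · -- deg Q ≥ 1 : degree contradiction
      have hQ2 : (C 4 * Q ^ 2 : Polynomial ℝ) ≠ 0 := by
        apply mul_ne_zero
        · exact Polynomial.C_ne_zero.mpr (by norm_num : (4:ℝ) ≠ 0)
        · exact pow_ne_zero _ hQ
      have hdQ2 : (C 4 * Q ^ 2 : Polynomial ℝ).natDegree = 2 * Q.natDegree := by
        rw [Polynomial.natDegree_C_mul (by norm_num : (4:ℝ) ≠ 0), Polynomial.natDegree_pow]
      have hA : (C (κ ^ 2) - C 4 * Q ^ 2 : Polynomial ℝ).natDegree = 2 * Q.natDegree := by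
        rw [Polynomial.natDegree_sub_eq_right_of_natDegree_lt]
        · exact hdQ2
        · rw [hdQ2, Polynomial.natDegree_C]; omega
      have hAne : (C (κ ^ 2) - C 4 * Q ^ 2 : Polynomial ℝ) ≠ 0 := by
        intro h
        rw [h] at hA
        simp at hA
        omega
      have hdP : Q.natDegree < P.natDegree := by
        have : P.natDegree ≠ 0 := by
          intro h
          obtain ⟨x, hx⟩ := Polynomial.natDegree_eq_zero.mp h
          apply hQ; rw [hQdef, ← hx]; simp
        exact hQdef ▸ Polynomial.natDegree_derivative_lt this
      have hrhs : (P ^ 2 * (C (κ ^ 2) - C 4 * Q ^ 2)).natDegree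
          = 2 * P.natDegree + 2 * Q.natDegree := by
        rw [Polynomial.natDegree_mul (pow_ne_zero _ hPne) hAne, Polynomial.natDegree_pow, hA]
      have hlhs : (Q.derivative ^ 2).natDegree ≤ 2 * (Q.natDegree - 1) := by
        calc (Q.derivative ^ 2).natDegree = 2 * Q.derivative.natDegree :=
              Polynomial.natDegree_pow _ _
          _ ≤ 2 * (Q.natDegree - 1) := by
              have := Polynomial.natDegree_derivative_le Q
              omega
      rw [pident, hrhs] at hlhs
      omega
  -- conclude
  have hcosall : ∀ v ∈ Set.Ioo a b, Real.cos (θ v) = 0 := by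
    intro v hv
    have h0 : (0:ℝ) = -κ * Real.cos (θ v) * Real.sin (θ v) := by
      rw [← hEq v hv, hQ0]; simp
    rcases mul_eq_zero.mp h0.symm with h | h
    · rcases mul_eq_zero.mp h with h | h
      · exact absurd (neg_eq_zero.mp h) hκ
      · exact h
    · exact absurd h (ne_of_gt (hsin v hv))
  intro u hu
  refine ⟨?_, hcosall u hu⟩
  have h1 : HasDerivAt (fun v => Real.cos (θ v)) (-Real.sin (θ u) * lam u) u :=
    (hθ u hu).cos
  have h2 : HasDerivAt (fun v => Real.cos (θ v)) 0 u := by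
    refine (hasDerivAt_const u (0:ℝ)).congr_of_eventuallyEq ?_
    filter_upwards [hnhds u hu] with v hv using hcosall v hv
  have h3 := h1.unique h2
  rcases mul_eq_zero.mp h3 with h | h
  · exact absurd (neg_eq_zero.mp h) (ne_of_gt (hsin u hu))
  · exact h
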